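/- Let B, C ⊆ ℝ^p, w : (B∪C)×(B∪C) → [0,∞], 0 < d ≤ p, and s ≥ d. Define for a compact set X the lower asymptotic polarization h̲^w_{s,d}(X) := liminf_{N→∞} 𝒫^w_s(X;N)/τ_{s,d}(N), where τ_{s,d}(N) = N^{s/d} for s > d and N log N for s = d. Then h̲^w_{s,d}(B∪C)^{−d/s} ≤ h̲^w_{s,d}(B)^{−d/s} + h̲^w_{s,d}(C)^{−d/s} (with the conventions ∞^{−d/s} = 0 and 0^{−d/s} = ∞). -/

import Mathlib

open scoped ENNReal BigOperators

/-- The `N`-th weighted `(s,w)`-polarization constant of `A`. -/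
noncomputable def wPolConst {p : ℕ}
    (w : EuclideanSpace ℝ (Fin p) → EuclideanSpace ℝ (Fin p) → ℝ≥0∞)
    (s : ℝ) (A : Set (EuclideanSpace ℝ (Fin p))) (N : ℕ) : ℝ≥0∞ :=
  ⨆ x : {x : Fin N → EuclideanSpace ℝ (Fin p) // ∀ j, x j ∈ A},
    ⨅ y ∈ A, ∑ j, w y (x.1 j) * (edist y (x.1 j) ^ s)⁻¹

/-- The normalizing sequence `τ_{s,d}(N)`: `N^{s/d}` for `s > d` and `N log N` for `s = d`. -/
noncomputable def tau (s d : ℝ) (N : ℕ) : ℝ≥0∞ :=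
  if s = d then (N : ℝ≥0∞) * ENNReal.ofReal (Real.log N) else (N : ℝ≥0∞) ^ (s / d)

/-- The lower asymptotic weighted polarization `h̲^w_{s,d}(X)`. -/
noncomputable def hLow {p : ℕ}
    (w : EuclideanSpace ℝ (Fin p) → EuclideanSpace ℝ (Fin p) → ℝ≥0∞)
    (s d : ℝ) (X : Set (EuclideanSpace ℝ (Fin p))) : ℝ≥0∞ :=
  Filter.liminf (fun N : ℕ => wPolConst w s X N / tau s d N) Filter.atTop

open Filter

section Aux

variable {p : ℕ}

lemma sum_emb_aux {M N : ℕ} (g : Fin N → ℝ≥0∞) (ι : Fin M → Fin N)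
    (hι : Function.Injective ι) (f : Fin M → ℝ≥0∞) (hf : ∀ i, f i = g (ι i)) :
    ∑ i, f i ≤ ∑ j, g j := by
  calc ∑ i, f i = ∑ i, g (ι i) := by simp only [hf]
    _ = ∑ j ∈ Finset.univ.image ι, g j :=
        (Finset.sum_image (fun a _ b _ h => hι h)).symm
    _ ≤ ∑ j, g j := Finset.sum_le_sum_of_subset (Finset.subset_univ _)

lemma wPol_combine (w : EuclideanSpace ℝ (Fin p) → EuclideanSpace ℝ (Fin p) → ℝ≥0∞)
    (s : ℝ) (B C : Set (EuclideanSpace ℝ (Fin p))) {N1 N2 N : ℕ}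
    (hN1 : 1 ≤ N1) (hN : N1 + N2 ≤ N) :
    min (wPolConst w s B N1) (wPolConst w s C N2) ≤ wPolConst w s (B ∪ C) N := by
  rw [wPolConst, wPolConst, iSup_inf_eq]
  refine iSup_le fun a => ?_
  rw [inf_iSup_eq]
  refine iSup_le fun b => ?_
  have h0 : 0 < N1 := hN1
  set z : Fin N → EuclideanSpace ℝ (Fin p) := fun j =>
    if h : (j : ℕ) < N1 then a.1 ⟨j, h⟩
    else if h2 : (j : ℕ) - N1 < N2 then b.1 ⟨(j : ℕ) - N1, h2⟩
    else a.1 ⟨0, h0⟩ with hzdef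
  have hzB : ∀ (j : Fin N) (i : Fin N1), (j : ℕ) = (i : ℕ) → z j = a.1 i := by
    intro j i hij
    have hi := i.isLt
    simp only [hzdef]
    rw [dif_pos (show (j : ℕ) < N1 by omega)]
    exact congrArg a.1 (Fin.ext hij)
  have hzC : ∀ (j : Fin N) (i : Fin N2), (j : ℕ) = N1 + (i : ℕ) → z j = b.1 i := by
    intro j i hij
    have hi := i.isLt
    simp only [hzdef]
    rw [dif_neg (show ¬ (j : ℕ) < N1 by omega), dif_pos (show (j : ℕ) - N1 < N2 by omega)]
    exact congrArg b.1 (Fin.ext (show (j : ℕ) - N1 = (i : ℕ) by omega))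
  have hzmem : ∀ j, z j ∈ B ∪ C := by
    intro j
    simp only [hzdef]
    split_ifs with h h2
    · exact Or.inl (a.2 _)
    · exact Or.inr (b.2 _)
    · exact Or.inl (a.2 _)
  rw [wPolConst]
  refine le_trans ?_
    (le_iSup _ (⟨z, hzmem⟩ : {x : Fin N → EuclideanSpace ℝ (Fin p) // ∀ j, x j ∈ B ∪ C}))
  refine le_iInf₂ fun y hy => ?_
  rcases hy with hy | hy
  · refine le_trans inf_le_left (le_trans (iInf₂_le y hy) ?_)
    refine sum_emb_aux _
      (fun i : Fin N1 => (⟨(i : ℕ), by have := i.isLt; omega⟩ : Fin N)) ?_ _ ?_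
    · intro i j hij
      exact Fin.ext (congrArg (fun x : Fin N => (x : ℕ)) hij)
    · intro i
      show w y (a.1 i) * (edist y (a.1 i) ^ s)⁻¹ =
        w y (z ⟨(i : ℕ), by have := i.isLt; omega⟩) *
          (edist y (z ⟨(i : ℕ), by have := i.isLt; omega⟩) ^ s)⁻¹
      rw [hzB _ i rfl]
  · refine le_trans inf_le_right (le_trans (iInf₂_le y hy) ?_)
    refine sum_emb_aux _
      (fun i : Fin N2 => (⟨N1 + (i : ℕ), by have := i.isLt; omega⟩ : Fin N)) ?_ _ ?_
    · intro i j hij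
      have h' := congrArg (fun x : Fin N => (x : ℕ)) hij
      simp only at h'
      exact Fin.ext (by omega)
    · intro i
      show w y (b.1 i) * (edist y (b.1 i) ^ s)⁻¹ =
        w y (z ⟨N1 + (i : ℕ), by have := i.isLt; omega⟩) *
          (edist y (z ⟨N1 + (i : ℕ), by have := i.isLt; omega⟩) ^ s)⁻¹
      rw [hzC _ i rfl]

lemma liminf_min_le_aux (u v : ℕ → ℝ≥0∞) :
    min (liminf u atTop) (liminf v atTop) ≤ liminf (fun n => min (u n) (v n)) atTop := by
  refine le_of_forall_lt fun c hc => ?_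
  obtain ⟨c', hcc', hc'⟩ := exists_between hc
  have h1 : ∀ᶠ n in atTop, c' < u n :=
    eventually_lt_of_lt_liminf (lt_of_lt_of_le hc' (min_le_left _ _))
  have h2 : ∀ᶠ n in atTop, c' < v n :=
    eventually_lt_of_lt_liminf (lt_of_lt_of_le hc' (min_le_right _ _))
  have : c' ≤ liminf (fun n => min (u n) (v n)) atTop := by
    refine le_liminf_of_le (by isBoundedDefault) ?_
    filter_upwards [h1, h2] with n hn1 hn2
    exact le_min hn1.le hn2.le
  exact lt_of_lt_of_le hcc' this

lemma const_mul_liminf_le_aux (c : ℝ≥0∞) (f : ℕ → ℝ≥0∞) :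
    c * liminf f atTop ≤ liminf (fun n => c * f n) atTop := by
  have h := ENNReal.le_liminf_mul (f := (atTop : Filter ℕ)) (u := fun _ : ℕ => c) (v := f)
  simpa [liminf_const, Pi.mul_def] using h

lemma liminf_comp_le_aux (f : ℕ → ℝ≥0∞) (g : ℕ → ℕ) (hg : Tendsto g atTop atTop) :
    liminf f atTop ≤ liminf (f ∘ g) atTop := by
  rw [liminf_comp]
  exact liminf_le_liminf_of_le hg

lemma div_aux (ca x τN τ1 : ℝ≥0∞) (h0 : ca ≠ 0) (ht : ca ≠ ∞) (h : ca * τN ≤ τ1) :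
    ca * (x / τ1) ≤ x / τN := by
  rw [div_eq_mul_inv, div_eq_mul_inv]
  have hinv : τ1⁻¹ ≤ (ca * τN)⁻¹ := ENNReal.inv_le_inv.mpr h
  calc ca * (x * τ1⁻¹) ≤ ca * (x * (ca * τN)⁻¹) :=
        mul_le_mul' le_rfl (mul_le_mul' le_rfl hinv)
    _ = (ca * ca⁻¹) * (x * τN⁻¹) := by
        rw [ENNReal.mul_inv (Or.inl h0) (Or.inl ht)]; ring
    _ = x * τN⁻¹ := by rw [ENNReal.mul_inv_cancel h0 ht, one_mul]

lemma tau_bound (s d : ℝ) (hd : 0 < d) (hs : d ≤ s) {a a1 : ℝ}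
    (ha : 0 < a) (h1 : a < a1) (ha1 : a1 < 1) :
    ∀ᶠ N : ℕ in atTop,
      ENNReal.ofReal a ^ (s / d) * tau s d N ≤ tau s d (⌈a1 * (N : ℝ)⌉₊) := by
  have hdne : d ≠ 0 := hd.ne'
  have ha1pos : 0 < a1 := ha.trans h1
  by_cases hsd : s = d
  · subst hsd
    simp only [tau, if_pos rfl, div_self hdne, ENNReal.rpow_one]
    have hlog : Tendsto (fun N : ℕ => Real.log N) atTop atTop :=
      Real.tendsto_log_atTop.comp tendsto_natCast_atTop_atTop
    have hK := hlog.eventually_ge_atTop ((a1 * (-Real.log a1)) / (a1 - a))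
    filter_upwards [hK, eventually_ge_atTop 1] with N hKN hN1
    have hN1R : (1 : ℝ) ≤ (N : ℝ) := by exact_mod_cast hN1
    set m := ⌈a1 * (N : ℝ)⌉₊ with hm
    have hmge : a1 * (N : ℝ) ≤ (m : ℝ) := Nat.le_ceil _
    have ha1N : 0 < a1 * (N : ℝ) := mul_pos ha1pos (by linarith)
    have hlogN : 0 ≤ Real.log N := Real.log_nonneg hN1R
    have hloga1 : Real.log a1 < 0 := Real.log_neg ha1pos ha1
    have haa1 : 0 < a1 - a := by linarith
    have hKN' : a1 * (-Real.log a1) ≤ (a1 - a) * Real.log N := by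
      rw [div_le_iff₀ haa1] at hKN
      linarith
    have hL : 0 ≤ Real.log a1 + Real.log N := by
      have h2 : a1 * (-Real.log a1) ≥ (a1 - a) * (-Real.log a1) := by nlinarith
      nlinarith
    have hlogm : Real.log a1 + Real.log N ≤ Real.log m := by
      rw [← Real.log_mul ha1pos.ne' (by linarith)]
      exact Real.log_le_log ha1N hmge
    have hreal : a * ((N : ℝ) * Real.log N) ≤ (m : ℝ) * Real.log m := by
      have hm0 : (0 : ℝ) ≤ m := le_trans ha1N.le hmge
      have step1 : (m : ℝ) * (Real.log a1 + Real.log N) ≤ (m : ℝ) * Real.log m :=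
        mul_le_mul_of_nonneg_left hlogm hm0
      have step2 : (a1 * N) * (Real.log a1 + Real.log N) ≤ (m : ℝ) * (Real.log a1 + Real.log N) :=
        mul_le_mul_of_nonneg_right hmge hL
      have step3 : a * ((N : ℝ) * Real.log N) ≤ (a1 * N) * (Real.log a1 + Real.log N) := by
        have hN0 : (0 : ℝ) ≤ (N : ℝ) := by linarith
        nlinarith [mul_le_mul_of_nonneg_left hKN' hN0]
      linarith
    calc ENNReal.ofReal a * ((N : ℝ≥0∞) * ENNReal.ofReal (Real.log N))
        = ENNReal.ofReal (a * ((N : ℝ) * Real.log N)) := by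
          rw [← ENNReal.ofReal_natCast N, ← ENNReal.ofReal_mul (by positivity),
            ← ENNReal.ofReal_mul ha.le]
      _ ≤ ENNReal.ofReal ((m : ℝ) * Real.log m) := ENNReal.ofReal_le_ofReal hreal
      _ = (m : ℝ≥0∞) * ENNReal.ofReal (Real.log m) := by
          rw [ENNReal.ofReal_mul (by positivity), ENNReal.ofReal_natCast]
  · have ht0 : (0 : ℝ) ≤ s / d := le_of_lt (div_pos (lt_of_lt_of_le hd hs) hd)
    simp only [tau, if_neg hsd]
    refine Eventually.of_forall fun N => ?_
    rw [← ENNReal.mul_rpow_of_nonneg _ _ ht0]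
    refine ENNReal.rpow_le_rpow ?_ ht0
    calc ENNReal.ofReal a * (N : ℝ≥0∞) = ENNReal.ofReal (a * N) := by
          rw [← ENNReal.ofReal_natCast N, ← ENNReal.ofReal_mul ha.le]
      _ ≤ ENNReal.ofReal ((⌈a1 * (N : ℝ)⌉₊ : ℝ)) := by
          refine ENNReal.ofReal_le_ofReal (le_trans ?_ (Nat.le_ceil _))
          exact mul_le_mul_of_nonneg_right h1.le (Nat.cast_nonneg N)
      _ = ((⌈a1 * (N : ℝ)⌉₊ : ℕ) : ℝ≥0∞) := ENNReal.ofReal_natCast _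

lemma key_aux (w : EuclideanSpace ℝ (Fin p) → EuclideanSpace ℝ (Fin p) → ℝ≥0∞)
    (s d : ℝ) (B C : Set (EuclideanSpace ℝ (Fin p)))
    (hd : 0 < d) (hs : d ≤ s) {a b : ℝ} (ha : 0 < a) (hb : 0 < b) (hab : a + b < 1) :
    min (ENNReal.ofReal a ^ (s / d) * hLow w s d B)
      (ENNReal.ofReal b ^ (s / d) * hLow w s d C) ≤ hLow w s d (B ∪ C) := by
  set t := s / d with htdef
  set a1 := a + (1 - a - b) / 3 with ha1def
  set b1 := b + (1 - a - b) / 3 with hb1def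
  have ha1 : a < a1 := by rw [ha1def]; linarith
  have hb1 : b < b1 := by rw [hb1def]; linarith
  have ha1pos : 0 < a1 := ha.trans ha1
  have hb1pos : 0 < b1 := hb.trans hb1
  have hsum : a1 + b1 < 1 := by rw [ha1def, hb1def]; linarith
  have ha1lt : a1 < 1 := by linarith
  have hb1lt : b1 < 1 := by linarith
  set n1 : ℕ → ℕ := fun N => ⌈a1 * (N : ℝ)⌉₊ with hn1def
  set n2 : ℕ → ℕ := fun N => ⌈b1 * (N : ℝ)⌉₊ with hn2def
  set vB : ℕ → ℝ≥0∞ := fun M => wPolConst w s B M / tau s d M with hvBdef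
  set vC : ℕ → ℝ≥0∞ := fun M => wPolConst w s C M / tau s d M with hvCdef
  have hgn1 : Tendsto n1 atTop atTop :=
    tendsto_nat_ceil_atTop.comp (Tendsto.const_mul_atTop ha1pos tendsto_natCast_atTop_atTop)
  have hgn2 : Tendsto n2 atTop atTop :=
    tendsto_nat_ceil_atTop.comp (Tendsto.const_mul_atTop hb1pos tendsto_natCast_atTop_atTop)
  have hca0 : (ENNReal.ofReal a ^ t) ≠ 0 :=
    (ENNReal.rpow_pos (ENNReal.ofReal_pos.mpr ha) ENNReal.ofReal_ne_top).ne'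
  have hcatop : (ENNReal.ofReal a ^ t) ≠ ∞ := by
    refine ENNReal.rpow_ne_top_of_nonneg ?_ ENNReal.ofReal_ne_top
    exact le_of_lt (div_pos (lt_of_lt_of_le hd hs) hd)
  have hcb0 : (ENNReal.ofReal b ^ t) ≠ 0 :=
    (ENNReal.rpow_pos (ENNReal.ofReal_pos.mpr hb) ENNReal.ofReal_ne_top).ne'
  have hcbtop : (ENNReal.ofReal b ^ t) ≠ ∞ := by
    refine ENNReal.rpow_ne_top_of_nonneg ?_ ENNReal.ofReal_ne_top
    exact le_of_lt (div_pos (lt_of_lt_of_le hd hs) hd)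
  have hcfg : ∀ᶠ N : ℕ in atTop, 1 ≤ n1 N ∧ n1 N + n2 N ≤ N := by
    have h2 : ∀ᶠ N : ℕ in atTop, (2 : ℝ) ≤ (1 - a1 - b1) * N := by
      have hpos : (0 : ℝ) < 1 - a1 - b1 := by linarith
      exact (Tendsto.const_mul_atTop hpos tendsto_natCast_atTop_atTop).eventually_ge_atTop 2
    filter_upwards [h2, eventually_ge_atTop 1] with N h2N hN1
    have hN1R : (1 : ℝ) ≤ (N : ℝ) := by exact_mod_cast hN1
    constructor
    · exact Nat.ceil_pos.mpr (mul_pos ha1pos (by linarith))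
    · have hc1 : ((n1 N : ℕ) : ℝ) < a1 * N + 1 := Nat.ceil_lt_add_one (by positivity)
      have hc2 : ((n2 N : ℕ) : ℝ) < b1 * N + 1 := Nat.ceil_lt_add_one (by positivity)
      have : ((n1 N : ℕ) : ℝ) + ((n2 N : ℕ) : ℝ) ≤ (N : ℝ) := by linarith
      exact_mod_cast this
  have hmain : ∀ᶠ N : ℕ in atTop,
      min (ENNReal.ofReal a ^ t * vB (n1 N)) (ENNReal.ofReal b ^ t * vC (n2 N))
        ≤ wPolConst w s (B ∪ C) N / tau s d N := by
    filter_upwards [hcfg, tau_bound s d hd hs ha ha1 ha1lt, tau_bound s d hd hs hb hb1 hb1lt]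
      with N hN hta htb
    obtain ⟨hN1, hNsum⟩ := hN
    have hc := wPol_combine w s B C hN1 hNsum
    have h1 : ENNReal.ofReal a ^ t * vB (n1 N) ≤ wPolConst w s B (n1 N) / tau s d N :=
      div_aux _ _ _ _ hca0 hcatop hta
    have h2 : ENNReal.ofReal b ^ t * vC (n2 N) ≤ wPolConst w s C (n2 N) / tau s d N :=
      div_aux _ _ _ _ hcb0 hcbtop htb
    calc min (ENNReal.ofReal a ^ t * vB (n1 N)) (ENNReal.ofReal b ^ t * vC (n2 N))
        ≤ min (wPolConst w s B (n1 N) / tau s d N) (wPolConst w s C (n2 N) / tau s d N) :=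
          min_le_min h1 h2
      _ ≤ min (wPolConst w s B (n1 N)) (wPolConst w s C (n2 N)) / tau s d N := by
          rcases min_cases (wPolConst w s B (n1 N)) (wPolConst w s C (n2 N)) with ⟨hm, _⟩ | ⟨hm, _⟩
          · rw [hm]; exact min_le_left _ _
          · rw [hm]; exact min_le_right _ _
      _ ≤ wPolConst w s (B ∪ C) N / tau s d N := ENNReal.div_le_div_right hc _
  have step1 : liminf (fun N => min (ENNReal.ofReal a ^ t * vB (n1 N))
      (ENNReal.ofReal b ^ t * vC (n2 N))) atTop ≤ hLow w s d (B ∪ C) :=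
    liminf_le_liminf hmain
  have step2 : min (liminf (fun N => ENNReal.ofReal a ^ t * vB (n1 N)) atTop)
      (liminf (fun N => ENNReal.ofReal b ^ t * vC (n2 N)) atTop)
      ≤ liminf (fun N => min (ENNReal.ofReal a ^ t * vB (n1 N))
        (ENNReal.ofReal b ^ t * vC (n2 N))) atTop :=
    liminf_min_le_aux _ _
  have step3a : ENNReal.ofReal a ^ t * liminf (vB ∘ n1) atTop
      ≤ liminf (fun N => ENNReal.ofReal a ^ t * vB (n1 N)) atTop :=
    const_mul_liminf_le_aux _ _
  have step3b : ENNReal.ofReal b ^ t * liminf (vC ∘ n2) atTop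
      ≤ liminf (fun N => ENNReal.ofReal b ^ t * vC (n2 N)) atTop :=
    const_mul_liminf_le_aux _ _
  have step4a : hLow w s d B ≤ liminf (vB ∘ n1) atTop := liminf_comp_le_aux vB n1 hgn1
  have step4b : hLow w s d C ≤ liminf (vC ∘ n2) atTop := liminf_comp_le_aux vC n2 hgn2
  calc min (ENNReal.ofReal a ^ t * hLow w s d B) (ENNReal.ofReal b ^ t * hLow w s d C)
      ≤ min (ENNReal.ofReal a ^ t * liminf (vB ∘ n1) atTop)
          (ENNReal.ofReal b ^ t * liminf (vC ∘ n2) atTop) :=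
        min_le_min (mul_le_mul' le_rfl step4a) (mul_le_mul' le_rfl step4b)
    _ ≤ min (liminf (fun N => ENNReal.ofReal a ^ t * vB (n1 N)) atTop)
          (liminf (fun N => ENNReal.ofReal b ^ t * vC (n2 N)) atTop) :=
        min_le_min step3a step3b
    _ ≤ _ := le_trans step2 step1

lemma mul_rpow_aux {c x : ℝ≥0∞} (hc0 : c ≠ 0) (hct : c ≠ ⊤) {r : ℝ} (hr : r < 0) :
    (c * x) ^ r = c ^ r * x ^ r := by
  rcases eq_or_ne x 0 with rfl | hx0
  · rw [mul_zero, ENNReal.zero_rpow_of_neg hr, ENNReal.mul_top]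
    exact (ENNReal.rpow_pos (lt_of_le_of_ne (zero_le : 0 ≤ c) (Ne.symm hc0)) hct).ne'
  rcases eq_or_ne x ⊤ with rfl | hxt
  · rw [ENNReal.mul_top hc0, ENNReal.top_rpow_of_neg hr, mul_zero]
  · exact ENNReal.mul_rpow_of_ne_top hct hxt r

end Aux

theorem stmt5 {p : ℕ} (B C : Set (EuclideanSpace ℝ (Fin p)))
    (w : EuclideanSpace ℝ (Fin p) → EuclideanSpace ℝ (Fin p) → ℝ≥0∞)
    (d s : ℝ) (hd : 0 < d) (hdp : d ≤ p) (hs : d ≤ s) :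
    hLow w s d (B ∪ C) ^ (-(d / s)) ≤ hLow w s d B ^ (-(d / s)) + hLow w s d C ^ (-(d / s)) := by
  have hs0 : 0 < s := lt_of_lt_of_le hd hs
  have hepos : 0 < d / s := div_pos hd hs0
  have heneg : -(d / s) < 0 := neg_lt_zero.mpr hepos
  -- the per-(a,b) bound
  have hmax : ∀ a b : ℝ, 0 < a → 0 < b → a + b < 1 →
      hLow w s d (B ∪ C) ^ (-(d / s)) ≤
        max (hLow w s d B ^ (-(d / s)) / ENNReal.ofReal a)
          (hLow w s d C ^ (-(d / s)) / ENNReal.ofReal b) := by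
    intro a b ha hb hab
    have hkey := key_aux w s d B C hd hs ha hb hab
    have hanti : ∀ x y : ℝ≥0∞, x ≤ y → y ^ (-(d / s)) ≤ x ^ (-(d / s)) := by
      intro x y hxy
      rw [ENNReal.rpow_neg, ENNReal.rpow_neg]
      exact ENNReal.inv_le_inv.mpr (ENNReal.rpow_le_rpow hxy hepos.le)
    have hpow : ∀ (c : ℝ) (x : ℝ≥0∞), 0 < c →
        (ENNReal.ofReal c ^ (s / d) * x) ^ (-(d / s)) = x ^ (-(d / s)) / ENNReal.ofReal c := by
      intro c x hc
      have hc0 : (ENNReal.ofReal c ^ (s / d)) ≠ 0 :=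
        (ENNReal.rpow_pos (ENNReal.ofReal_pos.mpr hc) ENNReal.ofReal_ne_top).ne'
      have hct : (ENNReal.ofReal c ^ (s / d)) ≠ ∞ :=
        ENNReal.rpow_ne_top_of_nonneg (le_of_lt (div_pos hs0 hd)) ENNReal.ofReal_ne_top
      rw [mul_rpow_aux hc0 hct heneg, ← ENNReal.rpow_mul]
      have h1 : (s / d) * (d / s) = 1 := by
        rw [div_mul_div_comm, mul_comm s d, div_self (mul_pos hd hs0).ne']
      have hexp : (s / d) * (-(d / s)) = -1 := by
        rw [mul_neg, h1]
      rw [hexp, ENNReal.rpow_neg_one, mul_comm]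
      exact (div_eq_mul_inv _ _).symm
    have h := hanti _ _ hkey
    refine le_trans h ?_
    rcases min_cases (ENNReal.ofReal a ^ (s / d) * hLow w s d B)
        (ENNReal.ofReal b ^ (s / d) * hLow w s d C) with ⟨hm, _⟩ | ⟨hm, _⟩
    · rw [hm, hpow a _ ha]
      exact le_max_left _ _
    · rw [hm, hpow b _ hb]
      exact le_max_right _ _
  refine ENNReal.le_of_forall_pos_le_add fun ε hε hfin => ?_
  set P := hLow w s d B ^ (-(d / s)) with hPdef
  set Q := hLow w s d C ^ (-(d / s)) with hQdef
  have hP : P ≠ ⊤ := by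
    intro h
    rw [h, top_add] at hfin
    exact absurd hfin (lt_irrefl _)
  have hQ : Q ≠ ⊤ := by
    intro h
    rw [h, add_top] at hfin
    exact absurd hfin (lt_irrefl _)
  set P' := P.toReal with hP'def
  set Q' := Q.toReal with hQ'def
  set ε' := (ε : ℝ) with hε'def
  have hε' : 0 < ε' := hε
  have hP'0 : 0 ≤ P' := ENNReal.toReal_nonneg
  have hQ'0 : 0 ≤ Q' := ENNReal.toReal_nonneg
  set S' := P' + Q' with hS'def
  have hden : 0 < S' + ε' := by positivity
  set a := (P' + ε' / 4) / (S' + ε') with hadef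
  set b := (Q' + ε' / 4) / (S' + ε') with hbdef
  have ha : 0 < a := div_pos (by positivity) hden
  have hb : 0 < b := div_pos (by positivity) hden
  have hab : a + b < 1 := by
    rw [hadef, hbdef, ← add_div, div_lt_one hden]
    rw [hS'def]; linarith
  have h := hmax a b ha hb hab
  have hPa : P / ENNReal.ofReal a ≤ ENNReal.ofReal (S' + ε') := by
    rw [ENNReal.div_le_iff_le_mul (Or.inl (ENNReal.ofReal_pos.mpr ha).ne')
      (Or.inl ENNReal.ofReal_ne_top)]
    have hmul : (S' + ε') * a = P' + ε' / 4 := by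
      rw [hadef, mul_div_cancel₀ _ hden.ne']
    rw [← ENNReal.ofReal_mul hden.le, hmul]
    calc P = ENNReal.ofReal P' := (ENNReal.ofReal_toReal hP).symm
      _ ≤ ENNReal.ofReal (P' + ε' / 4) := ENNReal.ofReal_le_ofReal (by linarith)
  have hQb : Q / ENNReal.ofReal b ≤ ENNReal.ofReal (S' + ε') := by
    rw [ENNReal.div_le_iff_le_mul (Or.inl (ENNReal.ofReal_pos.mpr hb).ne')
      (Or.inl ENNReal.ofReal_ne_top)]
    have hmul : (S' + ε') * b = Q' + ε' / 4 := by
      rw [hbdef, mul_div_cancel₀ _ hden.ne']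
    rw [← ENNReal.ofReal_mul hden.le, hmul]
    calc Q = ENNReal.ofReal Q' := (ENNReal.ofReal_toReal hQ).symm
      _ ≤ ENNReal.ofReal (Q' + ε' / 4) := ENNReal.ofReal_le_ofReal (by linarith)
  calc hLow w s d (B ∪ C) ^ (-(d / s)) ≤ ENNReal.ofReal (S' + ε') :=
        le_trans h (max_le hPa hQb)
    _ = ENNReal.ofReal P' + ENNReal.ofReal Q' + ENNReal.ofReal ε' := by
        rw [hS'def, ENNReal.ofReal_add (by positivity) hε'.le,
          ENNReal.ofReal_add hP'0 hQ'0]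
    _ = P + Q + ε := by
        rw [ENNReal.ofReal_toReal hP, ENNReal.ofReal_toReal hQ, hε'def,
          ENNReal.ofReal_coe_nnreal]
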